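/- arXiv:2002.08807 — 4 statements merged into one kernel-verified Lean document; each statement's English description precedes it below -/
import Mathlib

section
/- Let q ≥ 1 be an integer, let T : ℝ^q → ℝ be measurable and periodic of period 1 in each variable, let α < β be reals, and let C be a positive integer. Suppose that for every 1 ≤ j ≤ q and every ϑ ∈ [0,1]^{q−1}, the set of t ∈ [0,1] for which T evaluated at the point with j-th coordinate t and remaining coordinates ϑ lies in (α, β) is a union of at most C intervals. Let ψ₀ be the indicator function on [0,1]^q of the set {θ : T(θ) ∈ (α, β)}. Then for every m ∈ ℤ^q with m ≠ 0 one has |c_m(ψ₀)| ≤ C / (π · max_j |m_j|), and moreover |c_m(ψ₀)| ≤ c_0(ψ₀), where c_0(ψ₀) is the Lebesgue measure of {θ ∈ [0,1]^q : T(θ) ∈ (α, β)}. -/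
open MeasureTheory Real

/-- The unit box `[0,1]^q` in `ℝ^q`. -/
def unitBox (q : ℕ) : Set (Fin q → ℝ) := Set.univ.pi fun _ => Set.Icc (0:ℝ) 1

/-- The `m`-th Fourier coefficient of a (1-periodic) function `u : ℝ^q → ℝ`:
`c_m(u) = ∫_{[0,1]^q} u(θ) e^{-2πi (m·θ)} dθ`. -/
noncomputable def fourierCoeffPi (q : ℕ) (u : (Fin q → ℝ) → ℝ) (m : Fin q → ℤ) : ℂ :=
  ∫ θ in unitBox q,
    (u θ : ℂ) * Complex.exp (-(2 * (Real.pi : ℂ) * Complex.I) * (∑ j, (m j : ℂ) * (θ j : ℂ)))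

section Aux

open Set

lemma vinDisjointify {C : ℕ} (I : Fin C → Set ℝ)
    (hI : ∀ i, (I i).OrdConnected) :
    ∃ L : Fin C → Set ℝ, (∀ i, (L i).OrdConnected) ∧
      Pairwise (Function.onFun Disjoint L) ∧ (⋃ i, L i) = ⋃ i, I i := by
  set U : Set ℝ := ⋃ i, I i with hUdef
  set R : ℝ → ℝ → Prop := fun x y => x ∈ U ∧ y ∈ U ∧ uIcc x y ⊆ U with hR
  have hRsymm : ∀ {x y}, R x y → R y x := by
    rintro x y ⟨hx, hy, h⟩; exact ⟨hy, hx, by rwa [uIcc_comm]⟩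
  have hRtrans : ∀ {x y z}, R x y → R y z → R x z := by
    rintro x y z ⟨hx, hy, h1⟩ ⟨-, hz, h2⟩
    exact ⟨hx, hz, (uIcc_subset_uIcc_union_uIcc (a := x) (b := y) (c := z)).trans
      (union_subset h1 h2)⟩
  have hRI : ∀ i, ∀ x ∈ I i, ∀ y ∈ I i, R x y := by
    intro i x hx y hy
    exact ⟨Set.subset_iUnion I i hx, Set.subset_iUnion I i hy,
      ((hI i).uIcc_subset hx hy).trans (Set.subset_iUnion I i)⟩
  set K : Fin C → Set ℝ := fun i => {y | ∃ x ∈ I i, R x y} with hK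
  have hKU : ∀ i, K i ⊆ U := by rintro i y ⟨x, hx, -, hy, -⟩; exact hy
  have hIK : ∀ i, I i ⊆ K i := fun i x hx => ⟨x, hx, hRI i x hx x hx⟩
  have hKord : ∀ i, (K i).OrdConnected := by
    intro i
    constructor
    rintro y ⟨x, hx, hxy⟩ z ⟨x', hx', hx'z⟩ w hw
    refine ⟨x, hx, ?_⟩
    have hxx' : R x x' := hRI i x hx x' hx'
    have hw' : w ∈ uIcc y z := Icc_subset_uIcc hw
    have : w ∈ uIcc y x ∪ (uIcc x x' ∪ uIcc x' z) :=
      (uIcc_subset_uIcc_union_uIcc (a := y) (b := x) (c := z)).trans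
        (union_subset_union_right _ (uIcc_subset_uIcc_union_uIcc (a := x) (b := x') (c := z))) hw'
    rcases this with h | h | h
    · have hsub : uIcc x w ⊆ uIcc x y :=
        uIcc_subset_uIcc left_mem_uIcc (by rwa [uIcc_comm] at h)
      exact ⟨hxy.1, hxy.2.2 (by rwa [uIcc_comm] at h), hsub.trans hxy.2.2⟩
    · have hsub : uIcc x w ⊆ uIcc x x' := uIcc_subset_uIcc left_mem_uIcc h
      exact ⟨hxx'.1, hxx'.2.2 h, hsub.trans hxx'.2.2⟩
    · have hsub : uIcc x w ⊆ uIcc x x' ∪ uIcc x' w :=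
        uIcc_subset_uIcc_union_uIcc
      have hx'w : uIcc x' w ⊆ uIcc x' z := uIcc_subset_uIcc left_mem_uIcc h
      exact ⟨hxx'.1, hx'z.2.2 h, hsub.trans
        (union_subset hxx'.2.2 (hx'w.trans hx'z.2.2))⟩
  have hKK : ∀ i i', (K i ∩ K i').Nonempty → K i ⊆ K i' := by
    rintro i i' ⟨y, ⟨x, hx, hxy⟩, ⟨x', hx', hx'y⟩⟩ z ⟨x'', hx'', hx''z⟩
    exact ⟨x', hx', hRtrans hx'y (hRtrans (hRsymm hxy) (hRtrans (hRI i x hx x'' hx'') hx''z))⟩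
  classical
  set L : Fin C → Set ℝ := fun i => K i \ ⋃ (k : Fin C) (_ : k < i), K k with hL
  refine ⟨L, ?_, ?_, ?_⟩
  · intro i
    by_cases h : ∃ k, k < i ∧ (K k ∩ K i).Nonempty
    · obtain ⟨k, hk, hne⟩ := h
      have : L i = ∅ := by
        apply eq_empty_of_subset_empty
        intro y hy
        exact hy.2 (Set.mem_iUnion₂.2 ⟨k, hk, hKK i k (hne.mono (inter_comm _ _).le) hy.1⟩)
      rw [this]; exact ordConnected_empty
    · push_neg at h
      have : L i = K i := by
        refine Set.Subset.antisymm Set.diff_subset (Set.subset_diff.2 ⟨le_refl _, ?_⟩)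
        refine Set.disjoint_left.2 fun y hy hy' => ?_
        obtain ⟨k, hk, hyk⟩ := Set.mem_iUnion₂.1 hy'
        exact (Set.eq_empty_iff_forall_notMem.1 (h k hk)) y ⟨hyk, hy⟩
      rw [this]; exact hKord i
  · intro i k hik
    rcases Ne.lt_or_gt hik with h | h
    · refine Set.disjoint_left.2 fun y hyi hyk => ?_
      exact hyk.2 (Set.mem_iUnion₂.2 ⟨i, h, hyi.1⟩)
    · refine Set.disjoint_left.2 fun y hyi hyk => ?_
      exact hyi.2 (Set.mem_iUnion₂.2 ⟨k, h, hyk.1⟩)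
  · apply Set.Subset.antisymm
    · refine Set.iUnion_subset fun i => ?_
      exact (Set.diff_subset).trans (hKU i)
    · intro y hy
      obtain ⟨i, hi⟩ := Set.mem_iUnion.1 hy
      have hFne : (Finset.univ.filter (fun k => y ∈ K k)).Nonempty :=
        ⟨i, Finset.mem_filter.2 ⟨Finset.mem_univ _, hIK i hi⟩⟩
      set i₀ := (Finset.univ.filter (fun k => y ∈ K k)).min' hFne with hi₀
      have hyi₀ : y ∈ K i₀ := (Finset.mem_filter.1 ((Finset.univ.filter
        (fun k => y ∈ K k)).min'_mem hFne)).2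
      refine Set.mem_iUnion.2 ⟨i₀, hyi₀, fun hmem => ?_⟩
      obtain ⟨k, hk, hyk⟩ := Set.mem_iUnion₂.1 hmem
      exact absurd (Finset.min'_le _ k (Finset.mem_filter.2 ⟨Finset.mem_univ _, hyk⟩))
        (not_le.2 hk)


lemma vinNormExpOne (z : ℂ) (hz : z.im = 0) :
    ‖Complex.exp (-(2 * (π:ℂ) * Complex.I) * z)‖ = 1 := by
  rw [Complex.norm_exp]
  have : (-(2 * (π:ℂ) * Complex.I) * z).re = 0 := by
    simp [Complex.mul_re, Complex.mul_im, hz]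
  rw [this, Real.exp_zero]

lemma vinNormC (n : ℤ) (hn : n ≠ 0) : ‖-(2 * (π:ℂ) * Complex.I) * (n:ℂ)‖ = 2 * π * |(n:ℝ)| := by
  rw [norm_mul, norm_neg, norm_mul, norm_mul]
  simp [Complex.norm_real, Real.norm_eq_abs, abs_of_pos pi_pos]

lemma vinSingle (A : Set ℝ) (hA : A.OrdConnected) (hA1 : A ⊆ Icc 0 1)
    (n : ℤ) (hn : n ≠ 0) :
    ‖∫ t in A, Complex.exp ((-(2 * (π:ℂ) * Complex.I) * (n:ℂ)) * (t:ℂ))‖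
      ≤ 1 / (π * |(n:ℝ)|) := by
  have hnpos : (0:ℝ) < |(n:ℝ)| := by
    simp only [abs_pos]; exact_mod_cast fun h => hn (by exact_mod_cast h)
  have hrhs : (0:ℝ) < 1 / (π * |(n:ℝ)|) := by positivity
  rcases A.eq_empty_or_nonempty with rfl | hne
  · simp; positivity
  set a := sInf A with ha
  set b := sSup A with hb
  have hbdd : BddBelow A := ⟨0, fun x hx => (hA1 hx).1⟩
  have hbdd' : BddAbove A := ⟨1, fun x hx => (hA1 hx).2⟩
  have hab : a ≤ b := Real.sInf_le_sSup _ hbdd hbdd'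
  have hsub1 : A ⊆ Icc a b := fun x hx => ⟨csInf_le hbdd hx, le_csSup hbdd' hx⟩
  have hsub2 : Ioo a b ⊆ A := by
    intro x hx
    obtain ⟨y, hy, hyx⟩ := exists_lt_of_lt_csSup hne hx.2
    obtain ⟨z, hz, hzx⟩ := exists_lt_of_csInf_lt hne hx.1
    exact hA.out hz hy ⟨hzx.le, hyx.le⟩
  have haeq : A =ᵐ[volume] Ioo a b := by
    rw [MeasureTheory.ae_eq_set]
    constructor
    · refine measure_mono_null (fun x hx => ?_) (?_ : volume ({a, b} : Set ℝ) = 0)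
      · have := hsub1 hx.1
        have hx2 := hx.2
        simp only [Set.mem_Ioo, not_and_or, not_lt] at hx2
        rcases hx2 with h | h
        · exact Or.inl (le_antisymm h this.1)
        · exact Or.inr (Set.mem_singleton_iff.2 (le_antisymm this.2 h))
      · exact Set.Finite.measure_zero (by simp) _
    · rw [Set.diff_eq_empty.2 hsub2]; simp
  rw [setIntegral_congr_set haeq]
  rw [MeasureTheory.setIntegral_congr_set MeasureTheory.Ioo_ae_eq_Ioc,
    ← intervalIntegral.integral_of_le hab]
  have hc : (-(2 * (π:ℂ) * Complex.I) * (n:ℂ)) ≠ 0 := by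
    refine mul_ne_zero ?_ (by exact_mod_cast hn)
    simp [pi_ne_zero, Complex.I_ne_zero]
  rw [integral_exp_mul_complex hc]
  rw [norm_div, vinNormC n hn]
  have h1 : ∀ x : ℝ, ‖Complex.exp (-(2 * (π:ℂ) * Complex.I) * (n:ℂ) * (x:ℂ))‖ = 1 := by
    intro x
    rw [Complex.norm_exp]
    have : (-(2 * (π:ℂ) * Complex.I) * (n:ℂ) * (x:ℂ)).re = 0 := by
      simp [Complex.mul_re, Complex.mul_im]
    rw [this, Real.exp_zero]
  calc ‖Complex.exp (-(2 * (π:ℂ) * Complex.I) * (n:ℂ) * (b:ℂ))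
        - Complex.exp (-(2 * (π:ℂ) * Complex.I) * (n:ℂ) * (a:ℂ))‖ / (2 * π * |(n:ℝ)|)
      ≤ (1 + 1) / (2 * π * |(n:ℝ)|) := by
        gcongr
        exact (norm_sub_le _ _).trans (by rw [h1, h1])
    _ = 1 / (π * |(n:ℝ)|) := by field_simp; ring


lemma vinKey1d {C : ℕ} (U : Set ℝ) (hU1 : U ⊆ Icc 0 1) (I : Fin C → Set ℝ)
    (hI : ∀ i, (I i).OrdConnected) (hUI : U = ⋃ i, I i) (n : ℤ) (hn : n ≠ 0) :
    ‖∫ t in U, Complex.exp ((-(2 * (π:ℂ) * Complex.I) * (n:ℂ)) * (t:ℂ))‖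
      ≤ C / (π * |(n:ℝ)|) := by
  obtain ⟨L, hLord, hLdisj, hLU⟩ := vinDisjointify I hI
  rw [← hUI] at hLU
  have hLsub : ∀ i, L i ⊆ U := fun i => hLU ▸ Set.subset_iUnion L i
  have hLmeas : ∀ i, MeasurableSet (L i) := fun i => (hLord i).measurableSet
  set f : ℝ → ℂ := fun t => Complex.exp ((-(2 * (π:ℂ) * Complex.I) * (n:ℂ)) * (t:ℂ)) with hf
  have hUmeas : MeasurableSet U := by
    rw [← hLU]; exact MeasurableSet.iUnion hLmeas
  have hUfin : volume U < ⊤ :=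
    lt_of_le_of_lt (measure_mono hU1) (by simp)
  have hfc : Continuous f := by fun_prop
  have hint : IntegrableOn f U := by
    refine Integrable.mono' (g := fun _ => (1:ℝ)) (integrableOn_const hUfin.ne) ?_ ?_
    · exact hfc.aestronglyMeasurable.restrict
    · refine Filter.Eventually.of_forall fun x => ?_
      rw [hf, Complex.norm_exp]
      have : ((-(2 * (π:ℂ) * Complex.I) * (n:ℂ)) * (x:ℂ)).re = 0 := by
        simp [Complex.mul_re, Complex.mul_im]
      rw [this, Real.exp_zero]
  rw [← hLU, integral_iUnion hLmeas hLdisj (hLU ▸ hint), tsum_fintype]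
  calc ‖∑ i : Fin C, ∫ t in L i, f t‖ ≤ ∑ i : Fin C, ‖∫ t in L i, f t‖ :=
        norm_sum_le _ _
    _ ≤ ∑ _i : Fin C, 1 / (π * |(n:ℝ)|) := by
        refine Finset.sum_le_sum fun i _ => ?_
        exact vinSingle (L i) (hLord i) ((hLsub i).trans hU1) n hn
    _ = C / (π * |(n:ℝ)|) := by
        rw [Finset.sum_const, Finset.card_univ, Fintype.card_fin, nsmul_eq_mul]
        ring


end Aux

/-- Fourier coefficient bounds for the sharp cutoff `ψ₀` in the construction of the
multivariate Vinogradov function. -/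
theorem stmt2 (q : ℕ) (hq : 1 ≤ q) (T : (Fin q → ℝ) → ℝ) (hmeas : Measurable T)
    (hper : ∀ (θ : Fin q → ℝ) (j : Fin q), T (θ + Pi.single j 1) = T θ)
    (α β : ℝ) (hαβ : α < β) (C : ℕ) (hC : 0 < C)
    -- on each axis-parallel line in the unit box, the preimage of (α,β) is a
    -- union of at most C intervals
    (hlines : ∀ (j : Fin q) (θ : Fin q → ℝ), θ ∈ unitBox q →
      ∃ I : Fin C → Set ℝ, (∀ i, (I i).OrdConnected) ∧
        {t : ℝ | t ∈ Set.Icc (0:ℝ) 1 ∧ T (Function.update θ j t) ∈ Set.Ioo α β} = ⋃ i, I i)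
    (ψ₀ : (Fin q → ℝ) → ℝ)
    (hψ₀ : ψ₀ = Set.indicator (unitBox q ∩ {θ | T θ ∈ Set.Ioo α β}) (fun _ => (1:ℝ)))
    (m : Fin q → ℤ) (hm : m ≠ 0) :
    ‖fourierCoeffPi q ψ₀ m‖ ≤
        (C : ℝ) / (Real.pi * ((Finset.univ.sup fun j => (m j).natAbs : ℕ) : ℝ)) ∧
      ‖fourierCoeffPi q ψ₀ m‖ ≤
        (volume (unitBox q ∩ {θ | T θ ∈ Set.Ioo α β})).toReal := by
  subst hψ₀
  obtain ⟨n, rfl⟩ : ∃ n, q = n + 1 := ⟨q - 1, by omega⟩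
  set S : Set (Fin (n+1) → ℝ) := unitBox (n+1) ∩ {θ | T θ ∈ Set.Ioo α β} with hSdef
  have hboxmeas : MeasurableSet (unitBox (n+1)) :=
    MeasurableSet.univ_pi fun _ => measurableSet_Icc
  have hSmeas : MeasurableSet S := hboxmeas.inter (hmeas measurableSet_Ioo)
  set E : (Fin (n+1) → ℝ) → ℂ := fun θ =>
    Complex.exp (-(2 * (π:ℂ) * Complex.I) * (∑ k, (m k : ℂ) * (θ k : ℂ))) with hE
  have hEcont : Continuous E := by
    apply Complex.continuous_exp.comp
    fun_prop
  have hEnorm : ∀ θ, ‖E θ‖ = 1 := by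
    intro θ
    refine vinNormExpOne _ ?_
    simp [Complex.im_sum]
  have hvolbox : volume (unitBox (n+1)) = 1 := by
    rw [unitBox, volume_pi_pi]
    simp [Real.volume_Icc]
  have hSfin : volume S < ⊤ := by
    refine lt_of_le_of_lt (measure_mono Set.inter_subset_left) ?_
    rw [hvolbox]; exact ENNReal.one_lt_top
  -- the coefficient equals the integral of E over S
  have hpoint : ∀ θ : Fin (n+1) → ℝ,
      ((Set.indicator S (fun _ => (1:ℝ)) θ : ℝ) : ℂ) *
        Complex.exp (-(2 * (π:ℂ) * Complex.I) * (∑ k, (m k : ℂ) * (θ k : ℂ)))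
        = S.indicator E θ := by
    intro θ
    by_cases hθ : θ ∈ S
    · rw [Set.indicator_of_mem hθ, Set.indicator_of_mem hθ, hE]
      push_cast; ring
    · rw [Set.indicator_of_notMem hθ, Set.indicator_of_notMem hθ]
      push_cast; ring
  have hcoeff : fourierCoeffPi (n+1)
      (Set.indicator (unitBox (n+1) ∩ {θ | T θ ∈ Set.Ioo α β}) (fun _ => (1:ℝ))) m
      = ∫ θ in S, E θ := by
    rw [fourierCoeffPi]
    rw [show (fun θ : Fin (n+1) → ℝ =>
        ((Set.indicator (unitBox (n+1) ∩ {θ | T θ ∈ Set.Ioo α β}) (fun _ => (1:ℝ)) θ : ℝ) : ℂ) *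
          Complex.exp (-(2 * (π:ℂ) * Complex.I) * (∑ k, (m k : ℂ) * (θ k : ℂ))))
        = S.indicator E from funext hpoint]
    rw [setIntegral_eq_integral_of_forall_compl_eq_zero
      (fun θ hθ => Set.indicator_of_notMem (fun hc => hθ hc.1) E)]
    rw [integral_indicator hSmeas]
  have hIntOnE : IntegrableOn E S := by
    refine Integrable.mono' (g := fun _ => (1:ℝ)) (integrableOn_const hSfin.ne)
      hEcont.aestronglyMeasurable.restrict ?_
    exact Filter.Eventually.of_forall fun x => le_of_eq (hEnorm x)
  have hbound2 : ‖∫ θ in S, E θ‖ ≤ (volume S).toReal := by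
    have := norm_setIntegral_le_of_norm_le_const (C := 1) hSfin
      (fun x _ => le_of_eq (hEnorm x))
    rw [measureReal_def] at this
    simpa using this
  refine ⟨?_, by rw [hcoeff]; exact hbound2⟩
  -- main bound
  classical
  obtain ⟨j, -, hj⟩ := Finset.exists_mem_eq_sup (Finset.univ : Finset (Fin (n+1)))
    Finset.univ_nonempty (fun k => (m k).natAbs)
  set M := Finset.univ.sup (fun k => (m k).natAbs) with hM
  have hMpos : 0 < M := by
    obtain ⟨k, hk⟩ := Function.ne_iff.1 hm
    calc 0 < (m k).natAbs := Int.natAbs_pos.2 hk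
      _ ≤ M := Finset.le_sup (f := fun k => (m k).natAbs) (Finset.mem_univ k)
  have hmjM : (m j).natAbs = M := hj.symm
  have hmj0 : m j ≠ 0 := by
    intro h
    rw [h] at hmjM
    simp at hmjM
    omega
  have habs : |((m j : ℤ) : ℝ)| = (M : ℝ) := by
    rw [← hmjM, Nat.cast_natAbs, Int.cast_abs]
  -- Fubini setup
  set e := MeasurableEquiv.piFinSuccAbove (fun _ : Fin (n+1) => ℝ) j with he
  have hmp : MeasurePreserving e volume volume :=
    volume_preserving_piFinSuccAbove _ j
  have hesymm : ∀ p : ℝ × (Fin n → ℝ), e.symm p = j.insertNth p.1 p.2 := fun p => rfl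
  have hIint : Integrable (S.indicator E) := by
    exact (integrable_indicator_iff hSmeas).2 hIntOnE
  have h1 : (∫ θ, S.indicator E θ) = ∫ p : ℝ × (Fin n → ℝ), S.indicator E (e.symm p) :=
    ((MeasurePreserving.symm e hmp).integral_comp (MeasurableEquiv.measurableEmbedding _) _).symm
  have hF : Integrable (fun p : ℝ × (Fin n → ℝ) => S.indicator E (e.symm p))
      (volume.prod volume) := by
    rw [← Measure.volume_eq_prod]
    exact ((MeasurePreserving.symm e hmp).integrable_comp_emb (MeasurableEquiv.measurableEmbedding _)).2 hIint
  have h2 : (∫ p : ℝ × (Fin n → ℝ), S.indicator E (e.symm p))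
      = ∫ ϑ : Fin n → ℝ, ∫ t : ℝ, S.indicator E (e.symm (t, ϑ)) := by
    rw [Measure.volume_eq_prod, integral_prod_symm _ hF]
  -- membership in the box
  have hmem : ∀ (t : ℝ) (ϑ : Fin n → ℝ), j.insertNth t ϑ ∈ unitBox (n+1) ↔
      (t ∈ Set.Icc (0:ℝ) 1 ∧ ∀ k, ϑ k ∈ Set.Icc (0:ℝ) 1) := by
    intro t ϑ
    rw [unitBox, Set.mem_univ_pi, Fin.forall_iff_succAbove j]
    simp
  set box : Set (Fin n → ℝ) := Set.univ.pi fun _ => Set.Icc (0:ℝ) 1 with hbox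
  have hboxnmeas : MeasurableSet box := MeasurableSet.univ_pi fun _ => measurableSet_Icc
  have hvolboxn : volume box = 1 := by
    rw [hbox, volume_pi_pi]
    simp [Real.volume_Icc]
  have hzero : ∀ ϑ : Fin n → ℝ, ϑ ∉ box →
      (∫ t : ℝ, S.indicator E (j.insertNth t ϑ)) = 0 := by
    intro ϑ hϑ
    have hz : ∀ t : ℝ, S.indicator E (j.insertNth t ϑ) = 0 := by
      intro t
      apply Set.indicator_of_notMem
      intro hmemS
      exact hϑ (fun k _ => ((hmem t ϑ).1 hmemS.1).2 k)
    simp [hz]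
  have hboundB : ∀ ϑ : Fin n → ℝ, ϑ ∈ box →
      ‖∫ t : ℝ, S.indicator E (j.insertNth t ϑ)‖ ≤ (C:ℝ) / (π * M) := by
    intro ϑ hϑ
    set θ₀ : Fin (n+1) → ℝ := j.insertNth (0:ℝ) ϑ with hθ₀
    have hθ₀box : θ₀ ∈ unitBox (n+1) :=
      (hmem 0 ϑ).2 ⟨⟨le_refl 0, zero_le_one⟩, fun k => hϑ k (Set.mem_univ k)⟩
    obtain ⟨I, hIord, hIeq⟩ := hlines j θ₀ hθ₀box
    have hupdate : ∀ t : ℝ, Function.update θ₀ j t = j.insertNth t ϑ := by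
      intro t
      funext i
      rcases eq_or_ne i j with rfl | hij
      · simp
      · obtain ⟨k, rfl⟩ := Fin.exists_succAbove_eq hij
        rw [Function.update_of_ne hij, hθ₀]
        simp
    set U : Set ℝ := {t : ℝ | t ∈ Set.Icc (0:ℝ) 1 ∧
      T (Function.update θ₀ j t) ∈ Set.Ioo α β} with hU
    have hUsub : U ⊆ Set.Icc 0 1 := fun t ht => ht.1
    have hUI : U = ⋃ i, I i := hIeq
    have hUmeas : MeasurableSet U := by
      rw [hUI]; exact MeasurableSet.iUnion fun i => (hIord i).measurableSet
    have hmemS : ∀ t : ℝ, j.insertNth t ϑ ∈ S ↔ t ∈ U := by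
      intro t
      constructor
      · rintro ⟨hb, hT⟩
        exact ⟨((hmem t ϑ).1 hb).1, by rw [hupdate t]; exact hT⟩
      · rintro ⟨ht, hT⟩
        refine ⟨(hmem t ϑ).2 ⟨ht, fun k => hϑ k (Set.mem_univ k)⟩, ?_⟩
        show T (j.insertNth t ϑ) ∈ Set.Ioo α β
        rw [← hupdate t]; exact hT
    set w : ℂ := Complex.exp (-(2 * (π:ℂ) * Complex.I) *
      (∑ k : Fin n, ((m (j.succAbove k) : ℂ)) * (ϑ k : ℂ))) with hw
    have hwnorm : ‖w‖ = 1 := by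
      refine vinNormExpOne _ ?_
      simp [Complex.im_sum]
    have hexp : ∀ t : ℝ, E (j.insertNth t ϑ) =
        Complex.exp ((-(2 * (π:ℂ) * Complex.I) * ((m j : ℂ))) * (t:ℂ)) * w := by
      intro t
      have hsum : (∑ k : Fin (n+1), (m k : ℂ) * ((j.insertNth (α := fun _ => ℝ) t ϑ) k : ℂ))
          = (m j : ℂ) * (t:ℂ) + ∑ k : Fin n, (m (j.succAbove k) : ℂ) * (ϑ k : ℂ) := by
        rw [Fin.sum_univ_succAbove
          (fun k => (m k : ℂ) * ((j.insertNth (α := fun _ => ℝ) t ϑ) k : ℂ)) j]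
        simp
      rw [hE, hw]
      simp only
      rw [hsum, ← Complex.exp_add]
      congr 1
      ring
    have hfun : (fun t : ℝ => S.indicator E (j.insertNth t ϑ)) =
        fun t => (U.indicator (fun s : ℝ =>
          Complex.exp ((-(2 * (π:ℂ) * Complex.I) * ((m j : ℂ))) * (s:ℂ))) t) * w := by
      funext t
      by_cases ht : t ∈ U
      · rw [Set.indicator_of_mem ht, Set.indicator_of_mem ((hmemS t).2 ht), hexp t]
      · rw [Set.indicator_of_notMem ht,
          Set.indicator_of_notMem (fun hc => ht ((hmemS t).1 hc)), zero_mul]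
    rw [hfun, integral_mul_const, integral_indicator hUmeas, norm_mul, hwnorm, mul_one]
    have hkey := vinKey1d U hUsub I hIord hUI (m j) hmj0
    rw [habs] at hkey
    exact hkey
  -- assemble
  rw [hcoeff]
  calc ‖∫ θ in S, E θ‖ = ‖∫ ϑ : Fin n → ℝ, ∫ t : ℝ, S.indicator E (j.insertNth t ϑ)‖ := by
        rw [← integral_indicator hSmeas,
          ← setIntegral_eq_integral_of_forall_compl_eq_zero
            (fun θ hθ => Set.indicator_of_notMem (fun hc => hθ hc.1) E),
          setIntegral_eq_integral_of_forall_compl_eq_zero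
            (fun θ hθ => Set.indicator_of_notMem (fun hc => hθ hc.1) E),
          h1, h2]
        simp only [hesymm]
    _ = ‖∫ ϑ in box, ∫ t : ℝ, S.indicator E (j.insertNth t ϑ)‖ := by
        rw [setIntegral_eq_integral_of_forall_compl_eq_zero hzero]
    _ ≤ ((C:ℝ) / (π * M)) * (volume box).toReal := by
        exact norm_setIntegral_le_of_norm_le_const (by rw [hvolboxn]; exact ENNReal.one_lt_top)
          hboundB
    _ = (C:ℝ) / (π * M) := by rw [hvolboxn]; simp
end

section
/- Let q ≥ 1 be an integer and let T : ℝ^q → ℝ be K-Lipschitz with respect to the Euclidean norm for some K > 0. Let δ > 0 and set Δ' = K √q δ. Let α'' ≤ α' ≤ β' ≤ β'' be reals, and let ψ : ℝ^q → ℝ be measurable with 0 ≤ ψ ≤ 1 everywhere, ψ(θ) = 1 whenever T(θ) ∈ (α', β'), and ψ(θ) = 0 whenever T(θ) ∉ [α'', β'']. Define φ(θ) = (2δ)^{−q} ∫_{[−δ,δ]^q} ψ(θ + z) dz. Then 0 ≤ φ ≤ 1 everywhere, φ(θ) = 1 whenever T(θ) ∈ (α' + Δ', β' − Δ'), and φ(θ)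 = 0 whenever T(θ) ∉ [α'' − Δ', β'' + Δ']. -/
open MeasureTheory Real

/-- The inductive averaging step in the construction of the multivariate Vinogradov
function: averaging over a small box shrinks the plateau where the function equals 1
and enlarges the region where it vanishes, each by at most `Δ' = K √q δ` in the
values of `T`. -/
theorem stmt3 (q : ℕ) (hq : 1 ≤ q) (T : (Fin q → ℝ) → ℝ)
    (K : ℝ) (hK : 0 < K)
    -- T is K-Lipschitz for the Euclidean norm
    (hLip : ∀ x y : Fin q → ℝ, |T x - T y| ≤ K * Real.sqrt (∑ j, (x j - y j)^2))
    (δ : ℝ) (hδ : 0 < δ) (Δ' : ℝ) (hΔ' : Δ' = K * Real.sqrt q * δ)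
    (α'' α' β' β'' : ℝ) (h1 : α'' ≤ α') (h2 : α' ≤ β') (h3 : β' ≤ β'')
    (ψ : (Fin q → ℝ) → ℝ) (hmeas : Measurable ψ)
    (hψ01 : ∀ θ, 0 ≤ ψ θ ∧ ψ θ ≤ 1)
    (hψ1 : ∀ θ, T θ ∈ Set.Ioo α' β' → ψ θ = 1)
    (hψ0 : ∀ θ, T θ ∉ Set.Icc α'' β'' → ψ θ = 0)
    (φ : (Fin q → ℝ) → ℝ)
    (hφ : ∀ θ, φ θ = ((2*δ)^q)⁻¹ *
      ∫ z in Set.univ.pi fun _ : Fin q => Set.Icc (-δ) δ, ψ (θ + z)) :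
    (∀ θ, 0 ≤ φ θ ∧ φ θ ≤ 1) ∧
    (∀ θ, T θ ∈ Set.Ioo (α' + Δ') (β' - Δ') → φ θ = 1) ∧
    (∀ θ, T θ ∉ Set.Icc (α'' - Δ') (β'' + Δ') → φ θ = 0) := by
  have h2δ : (0:ℝ) < 2*δ := by linarith
  have hpow : (0:ℝ) < (2*δ)^q := pow_pos h2δ q
  set S : Set (Fin q → ℝ) := Set.univ.pi fun _ : Fin q => Set.Icc (-δ) δ with hS
  have hmeasS : MeasurableSet S := MeasurableSet.univ_pi fun _ => measurableSet_Icc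
  have hvol : volume S = ENNReal.ofReal ((2*δ)^q) := by
    rw [hS, volume_pi_pi]
    have hI : volume (Set.Icc (-δ) δ) = ENNReal.ofReal (2*δ) := by
      rw [Real.volume_Icc]; ring_nf
    simp only [hI, Finset.prod_const, Finset.card_univ, Fintype.card_fin,
      ← ENNReal.ofReal_pow h2δ.le]
  have hvolne : volume S ≠ ⊤ := by rw [hvol]; exact ENNReal.ofReal_ne_top
  -- key Lipschitz bound on the box
  have key : ∀ θ z, z ∈ S → |T (θ + z) - T θ| ≤ Δ' := by
    intro θ z hz
    have hzj : ∀ j, (z j)^2 ≤ δ^2 := by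
      intro j
      have := hz j (Set.mem_univ j)
      exact sq_le_sq' this.1 this.2
    calc |T (θ + z) - T θ| ≤ K * Real.sqrt (∑ j, ((θ+z) j - θ j)^2) := hLip _ _
      _ = K * Real.sqrt (∑ j, (z j)^2) := by
          congr 2; apply Finset.sum_congr rfl; intro j _; simp
      _ ≤ K * Real.sqrt ((q:ℝ) * δ^2) := by
          gcongr
          calc (∑ j, (z j)^2) ≤ ∑ _j : Fin q, δ^2 :=
                Finset.sum_le_sum fun j _ => hzj j
            _ = (q:ℝ) * δ^2 := by simp [Finset.sum_const, mul_comm]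
      _ = Δ' := by
          rw [hΔ', Real.sqrt_mul (Nat.cast_nonneg q), Real.sqrt_sq hδ.le, mul_assoc]
  -- integrability
  have hint : ∀ θ, IntegrableOn (fun z => ψ (θ + z)) S volume := by
    intro θ
    apply Measure.integrableOn_of_bounded hvolne
      ((hmeas.comp (measurable_const.add measurable_id)).aestronglyMeasurable)
    · filter_upwards with z
      simp only [Function.comp_apply, Pi.add_apply, id_eq]
      rw [Real.norm_eq_abs, abs_le]
      exact ⟨by linarith [(hψ01 (θ+z)).1], (hψ01 (θ+z)).2⟩
  have hint1 : IntegrableOn (fun _ : Fin q → ℝ => (1:ℝ)) S volume :=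
    integrableOn_const hvolne
  have hconst : ∫ _z in S, (1:ℝ) = (2*δ)^q := by
    rw [setIntegral_const, Measure.real, hvol, ENNReal.toReal_ofReal hpow.le, smul_eq_mul, mul_one]
  refine ⟨?_, ?_, ?_⟩
  · intro θ
    constructor
    · rw [hφ θ]
      exact mul_nonneg (inv_nonneg.2 hpow.le)
        (setIntegral_nonneg hmeasS fun z _ => (hψ01 _).1)
    · rw [hφ θ]
      rw [inv_mul_le_iff₀ hpow, mul_one]
      calc (∫ z in S, ψ (θ + z)) ≤ ∫ _z in S, (1:ℝ) :=
            setIntegral_mono_on (hint θ) hint1 hmeasS fun z _ => (hψ01 _).2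
        _ = (2*δ)^q := hconst
  · intro θ hθ
    have : ∀ z ∈ S, ψ (θ + z) = 1 := by
      intro z hz
      apply hψ1
      have := key θ z hz
      rw [abs_le] at this
      constructor <;> [linarith [hθ.1]; linarith [hθ.2]]
    rw [hφ θ]
    rw [setIntegral_congr_fun hmeasS this, hconst]
    field_simp
  · intro θ hθ
    have : ∀ z ∈ S, ψ (θ + z) = 0 := by
      intro z hz
      apply hψ0
      have hk := key θ z hz
      rw [abs_le] at hk
      rw [Set.mem_Icc] at hθ ⊢
      push_neg at hθ ⊢
      intro hα
      by_contra hβ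
      push_neg at hβ
      rcases le_or_gt (α'' - Δ') (T θ) with h | h
      · have := hθ h; linarith
      · linarith
    rw [hφ θ, setIntegral_congr_fun hmeasS this]
    simp
end

section
/- Let g ≥ 1 be an integer, let a_1, …, a_g be integers with N := max_l |a_l| ≥ 1, let r_1, …, r_g be real numbers, and define f : ℝ → ℝ by f(ϑ) = Σ_{l=1}^g 2 cos(2π a_l ϑ + r_l). Let γ ∈ ℝ and suppose f is not identically equal to γ on [0,1]. Then the set {ϑ ∈ [0,1] : f(ϑ) = γ} has at most 4N elements. -/
open Real

/-- A non-degenerate level set of a real trigonometric polynomial of degree at most `N`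
meets `[0,1]` in at most `4N` points (key step of Lemma 3.8 of the paper). -/
theorem stmt4 (g : ℕ) (hg : 1 ≤ g) (a : Fin g → ℤ) (r : Fin g → ℝ)
    (N : ℕ) (hN : N = Finset.univ.sup fun l => (a l).natAbs) (hN1 : 1 ≤ N)
    (f : ℝ → ℝ)
    (hf : ∀ ϑ : ℝ, f ϑ = ∑ l, 2 * Real.cos (2 * Real.pi * (a l : ℝ) * ϑ + r l))
    (γ : ℝ) (hnc : ∃ ϑ ∈ Set.Icc (0:ℝ) 1, f ϑ ≠ γ) :
    ∃ s : Finset ℝ, {ϑ : ℝ | ϑ ∈ Set.Icc (0:ℝ) 1 ∧ f ϑ = γ} ⊆ ↑s ∧ s.card ≤ 4 * N := by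
  classical
  have hπ : (0:ℝ) < Real.pi := Real.pi_pos
  have habs : ∀ l, (a l).natAbs ≤ N := by
    intro l; rw [hN]; exact Finset.le_sup (f := fun l => (a l).natAbs) (Finset.mem_univ l)
  have ha1 : ∀ l, (0:ℤ) ≤ (N:ℤ) + a l := by intro l; have := habs l; omega
  have ha2 : ∀ l, (0:ℤ) ≤ (N:ℤ) - a l := by intro l; have := habs l; omega
  -- the associated polynomial
  set P : Polynomial ℂ :=
    (∑ l, (Polynomial.C (Complex.exp ((r l : ℂ) * Complex.I)) *
        Polynomial.X ^ ((N:ℤ) + a l).toNat +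
      Polynomial.C (Complex.exp (-(r l : ℂ) * Complex.I)) *
        Polynomial.X ^ ((N:ℤ) - a l).toNat)) -
      Polynomial.C (γ:ℂ) * Polynomial.X ^ N with hP
  have key : ∀ ϑ : ℝ, P.eval (Complex.exp ((2*Real.pi*ϑ : ℝ) * Complex.I)) =
      Complex.exp ((2*Real.pi*ϑ : ℝ) * Complex.I) ^ N * ((f ϑ : ℂ) - γ) := by
    intro ϑ
    set z := Complex.exp ((2*Real.pi*ϑ : ℝ) * Complex.I) with hz
    have hz0 : z ≠ 0 := Complex.exp_ne_zero _
    have hterm : ∀ l, Complex.exp ((r l : ℂ) * Complex.I) * z ^ ((N:ℤ) + a l).toNat +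
        Complex.exp (-(r l : ℂ) * Complex.I) * z ^ ((N:ℤ) - a l).toNat
        = z ^ N * ((2 * Real.cos (2 * Real.pi * (a l : ℝ) * ϑ + r l) : ℝ) : ℂ) := by
      intro l
      have h1 : ((((N:ℤ) + a l).toNat : ℤ)) = (N:ℤ) + a l := Int.toNat_of_nonneg (ha1 l)
      have h2 : ((((N:ℤ) - a l).toNat : ℤ)) = (N:ℤ) - a l := Int.toNat_of_nonneg (ha2 l)
      have hza : ∀ b : ℤ, z ^ b = Complex.exp ((b:ℂ) * ((2*Real.pi*ϑ : ℝ) * Complex.I)) := by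
        intro b; rw [Complex.exp_int_mul]
      have hz1 : z ^ ((N:ℤ) + a l).toNat = z ^ N * z ^ (a l) := by
        rw [← zpow_natCast z (((N:ℤ) + a l).toNat), h1, zpow_add₀ hz0, zpow_natCast]
      have hz2 : z ^ ((N:ℤ) - a l).toNat = z ^ N * z ^ (-(a l)) := by
        rw [← zpow_natCast z (((N:ℤ) - a l).toNat), h2, sub_eq_add_neg,
          zpow_add₀ hz0, zpow_natCast]
      set θ : ℝ := 2 * Real.pi * (a l : ℝ) * ϑ + r l with hθ
      have e1 : Complex.exp ((r l : ℂ) * Complex.I) * z ^ (a l)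
          = Complex.exp ((θ:ℂ) * Complex.I) := by
        rw [hza, ← Complex.exp_add]
        congr 1
        push_cast [hθ]
        ring
      have e2 : Complex.exp (-(r l : ℂ) * Complex.I) * z ^ (-(a l))
          = Complex.exp (-(θ:ℂ) * Complex.I) := by
        rw [hza, ← Complex.exp_add]
        congr 1
        push_cast [hθ]
        ring
      have e3 : Complex.exp ((θ:ℂ) * Complex.I) + Complex.exp (-(θ:ℂ) * Complex.I)
          = ((2 * Real.cos θ : ℝ) : ℂ) := by
        rw [← Complex.two_cos]
        push_cast [Complex.ofReal_cos]
        ring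
      rw [hz1, hz2]
      calc Complex.exp ((r l : ℂ) * Complex.I) * (z ^ N * z ^ (a l)) +
            Complex.exp (-(r l : ℂ) * Complex.I) * (z ^ N * z ^ (-(a l)))
          = z ^ N * (Complex.exp ((r l : ℂ) * Complex.I) * z ^ (a l) +
              Complex.exp (-(r l : ℂ) * Complex.I) * z ^ (-(a l))) := by ring
        _ = z ^ N * ((2 * Real.cos θ : ℝ) : ℂ) := by rw [e1, e2, e3]
    rw [hP]
    simp only [Polynomial.eval_sub, Polynomial.eval_finset_sum, Polynomial.eval_add,
      Polynomial.eval_mul, Polynomial.eval_C, Polynomial.eval_pow, Polynomial.eval_X]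
    rw [Finset.sum_congr rfl (fun l _ => hterm l), ← Finset.mul_sum, hf ϑ]
    push_cast
    ring
  -- P is nonzero
  have hPne : P ≠ 0 := by
    obtain ⟨ϑ₀, _, hfne⟩ := hnc
    intro h0
    have hk := key ϑ₀
    rw [h0, Polynomial.eval_zero] at hk
    have hz0 : Complex.exp ((2*Real.pi*ϑ₀ : ℝ) * Complex.I) ^ N ≠ 0 :=
      pow_ne_zero _ (Complex.exp_ne_zero _)
    have : ((f ϑ₀ : ℂ) - γ) = 0 := by
      rcases mul_eq_zero.mp hk.symm with h | h
      · exact absurd h hz0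
      · exact h
    apply hfne
    have : (f ϑ₀ : ℂ) = (γ : ℂ) := by linear_combination this
    exact_mod_cast this
  -- degree bound
  have hdeg : P.natDegree ≤ 2 * N := by
    rw [hP]
    refine le_trans (Polynomial.natDegree_sub_le _ _) (max_le ?_ ?_)
    · refine Polynomial.natDegree_sum_le_of_forall_le _ _ (fun l _ => ?_)
      refine le_trans (Polynomial.natDegree_add_le _ _) (max_le ?_ ?_)
      · refine le_trans (Polynomial.natDegree_mul_le) ?_
        rw [Polynomial.natDegree_C, Polynomial.natDegree_X_pow]
        have := habs l; omega
      · refine le_trans (Polynomial.natDegree_mul_le) ?_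
        rw [Polynomial.natDegree_C, Polynomial.natDegree_X_pow]
        have := habs l; omega
    · refine le_trans (Polynomial.natDegree_mul_le) ?_
      rw [Polynomial.natDegree_C, Polynomial.natDegree_X_pow]
      omega
  set T : Finset ℂ := P.roots.toFinset with hT
  have hTcard : T.card ≤ 2 * N :=
    le_trans (Multiset.toFinset_card_le _) (le_trans (Polynomial.card_roots' P) hdeg)
  set w : ℂ → ℝ := fun z => Complex.arg z / (2 * Real.pi) with hw
  refine ⟨T.image w ∪ T.image (fun z => w z + 1), ?_, ?_⟩
  · rintro ϑ ⟨hmem, hfγ⟩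
    set z := Complex.exp ((2*Real.pi*ϑ : ℝ) * Complex.I) with hz
    have hz0 : z ≠ 0 := Complex.exp_ne_zero _
    have hroot : P.eval z = 0 := by
      rw [key ϑ, hfγ]; ring
    have hzT : z ∈ T := by
      rw [hT, Multiset.mem_toFinset, Polynomial.mem_roots hPne]
      exact hroot
    -- relate ϑ to arg z
    have habsz : ‖z‖ = 1 := Complex.norm_exp_ofReal_mul_I _
    have hzarg : Complex.exp ((2*Real.pi*ϑ : ℝ) * Complex.I)
        = Complex.exp ((Complex.arg z : ℂ) * Complex.I) := by
      conv_lhs => rw [← hz, ← Complex.norm_mul_exp_arg_mul_I z, habsz]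
      simp
    obtain ⟨n, hn⟩ := Complex.exp_eq_exp_iff_exists_int.mp hzarg
    have hnre : 2*Real.pi*ϑ = Complex.arg z + n * (2 * Real.pi) := by
      have := congrArg Complex.im hn
      simpa [Complex.ofReal_mul, Complex.mul_im, Complex.add_im] using this
    have hϑeq : ϑ = w z + n := by
      rw [hw]
      field_simp at hnre ⊢
      linarith [hnre]
    have hargu : Complex.arg z ≤ Real.pi := Complex.arg_le_pi z
    have hargl : -Real.pi < Complex.arg z := Complex.neg_pi_lt_arg z
    have hwu : w z ≤ 1/2 := by
      rw [hw]
      rw [div_le_iff₀ (by linarith)]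
      linarith
    have hwl : -(1/2 : ℝ) < w z := by
      rw [hw]
      rw [lt_div_iff₀ (by linarith)]
      linarith
    obtain ⟨h0, h1⟩ := hmem
    have hn0 : (0:ℤ) ≤ n := by
      by_contra h
      push_neg at h
      have hn' : n ≤ -1 := by omega
      have : (n:ℝ) ≤ -1 := by exact_mod_cast hn'
      linarith [hϑeq ▸ h0]
    have hn1 : n ≤ 1 := by
      by_contra h
      push_neg at h
      have : (2:ℝ) ≤ (n:ℝ) := by exact_mod_cast h
      linarith [hϑeq ▸ h1]
    interval_cases n
    · simp only [Finset.coe_union, Set.mem_union]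
      left
      simp only [Finset.coe_image, Set.mem_image]
      exact ⟨z, by simpa using hzT, by rw [hϑeq]; push_cast; ring⟩
    · simp only [Finset.coe_union, Set.mem_union]
      right
      simp only [Finset.coe_image, Set.mem_image]
      exact ⟨z, by simpa using hzT, by rw [hϑeq]; push_cast; ring⟩
  · refine le_trans (Finset.card_union_le _ _) ?_
    have h1 := Finset.card_image_le (s := T) (f := w)
    have h2 := Finset.card_image_le (s := T) (f := fun z => w z + 1)
    omega
end

section
/- Let a be a real number with 0 < a < 1 and let y > 0 be real. Then (1/(2π)) ∫_{−∞}^{∞} y^{2+it} / (2 + a + it)^2 dt equals 0 if 0 < y < 1, and equals y^{−a} · log(y) if y ≥ 1. (Here y^{2+it} denotes the complex power exp((2+it)·log y), and the integral is absolutely convergent.) -/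
open MeasureTheory Real Complex Set Filter

lemma realInt {c : ℝ} (hc : 0 < c) :
    IntegrableOn (fun u : ℝ => u * Real.exp (-(c * u))) (Ioi 0) := by
  apply integrable_of_isBigO_exp_neg (half_pos hc) (by fun_prop)
  rw [Asymptotics.isBigO_iff]
  refine ⟨1, ?_⟩
  have h2 : Tendsto (fun x : ℝ => x * Real.exp (-(c/2) * x)) atTop (nhds 0) := by
    refine (tendsto_rpow_mul_exp_neg_mul_atTop_nhds_zero 1 (c/2) (half_pos hc)).congr' ?_
    filter_upwards [eventually_gt_atTop 0] with x hx
    rw [Real.rpow_one]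
  filter_upwards [h2.eventually (eventually_le_nhds (show (0:ℝ) < 1 by norm_num)),
    eventually_ge_atTop 0] with x hx hx0
  have key : x * Real.exp (-(c * x)) = (x * Real.exp (-(c/2) * x)) * Real.exp (-(c/2) * x) := by
    rw [mul_assoc, ← Real.exp_add]; ring_nf
  rw [Real.norm_eq_abs, Real.norm_eq_abs,
    _root_.abs_of_nonneg (mul_nonneg hx0 (Real.exp_pos _).le),
    _root_.abs_of_nonneg (Real.exp_pos _).le, one_mul, key]
  exact mul_le_of_le_one_left (Real.exp_pos _).le hx

lemma cplxInt {z : ℂ} (hz : 0 < z.re) :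
    IntegrableOn (fun u : ℝ => (u : ℂ) * Complex.exp (-(z * u))) (Ioi 0) := by
  refine Integrable.mono' (realInt hz) ?_ ?_
  · exact (Continuous.aestronglyMeasurable (by continuity)).restrict
  · filter_upwards [ae_restrict_mem measurableSet_Ioi] with u hu
    have hre : (-(z * (u:ℂ))).re = -(z.re * u) := by simp [Complex.mul_re]
    rw [norm_mul, Complex.norm_exp, hre, Complex.norm_real,
      Real.norm_eq_abs, _root_.abs_of_nonneg (le_of_lt hu)]

lemma cplxVal {z : ℂ} (hz : 0 < z.re) :
    ∫ u : ℝ in Ioi 0, (u : ℂ) * Complex.exp (-(z * u)) = 1 / z ^ 2 := by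
  have hz0 : z ≠ 0 := fun h => by simp [h] at hz
  set G : ℝ → ℂ := fun u => -(u / z + 1 / z ^ 2) * Complex.exp (-(z * u)) with hG
  have hderiv : ∀ u ∈ Ici (0:ℝ), HasDerivAt G ((u : ℂ) * Complex.exp (-(z * u))) u := by
    intro u _
    have hGc : HasDerivAt (fun w : ℂ => -(w / z + 1 / z ^ 2) * Complex.exp (-(z * w)))
        ((u:ℂ) * Complex.exp (-(z * u))) (u:ℂ) := by
      have h1 : HasDerivAt (fun w : ℂ => -(w / z + 1 / z ^ 2)) (-(1 / z)) (u:ℂ) := by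
        have := (((hasDerivAt_id (u:ℂ)).div_const z).add_const (1 / z ^ 2)).neg
        exact this
      have h2 : HasDerivAt (fun w : ℂ => Complex.exp (-(z * w)))
          (-z * Complex.exp (-(z * (u:ℂ)))) (u:ℂ) := by
        have h0 : HasDerivAt (fun w : ℂ => -(z * w)) (-z) (u:ℂ) := by
          have := ((hasDerivAt_id (u:ℂ)).const_mul z).neg
          exact this.congr_deriv (by ring)
        exact h0.cexp.congr_deriv (by ring)
      have := h1.mul h2
      exact this.congr_deriv (by field_simp; ring)
    exact hGc.comp_ofReal
  have hint := cplxInt hz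
  have htend : Tendsto G atTop (nhds 0) := by
    rw [tendsto_zero_iff_norm_tendsto_zero]
    have t1 : Tendsto (fun u : ℝ => u * Real.exp (-(z.re * u))) atTop (nhds 0) := by
      refine (tendsto_rpow_mul_exp_neg_mul_atTop_nhds_zero 1 z.re hz).congr' ?_
      filter_upwards [eventually_gt_atTop 0] with x hx
      rw [Real.rpow_one, neg_mul]
    have t2 : Tendsto (fun u : ℝ => Real.exp (-(z.re * u))) atTop (nhds 0) := by
      have := Real.tendsto_exp_atBot.comp
        (tendsto_id.const_mul_atTop_of_neg (neg_neg_iff_pos.2 hz))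
      exact this.congr fun x => by simp [mul_comm]
    have hb : Tendsto (fun u : ℝ => (u / ‖z‖ + 1 / ‖z‖ ^ 2) * Real.exp (-(z.re * u)))
        atTop (nhds 0) := by
      have := (t1.const_mul (1 / ‖z‖)).add (t2.const_mul (1 / ‖z‖ ^ 2))
      rw [mul_zero, mul_zero, add_zero] at this
      exact this.congr fun u => by ring
    refine squeeze_zero' (Eventually.of_forall fun u => norm_nonneg _) ?_ hb
    filter_upwards [eventually_ge_atTop 0] with u hu
    have hre : (-(z * (u:ℂ))).re = -(z.re * u) := by simp [Complex.mul_re]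
    have e0 : ‖G u‖ = ‖(u:ℂ)/z + 1/z^2‖ * Real.exp (-(z.re * u)) := by
      rw [hG, norm_mul, norm_neg, Complex.norm_exp, hre]
    have e1 : ‖(u:ℂ)/z‖ = u/‖z‖ := by
      rw [norm_div, Complex.norm_real, Real.norm_eq_abs, _root_.abs_of_nonneg hu]
    have e2 : ‖(1:ℂ)/z^2‖ = 1/‖z‖^2 := by
      rw [norm_div, norm_one, norm_pow]
    rw [e0]
    exact mul_le_mul_of_nonneg_right ((norm_add_le _ _).trans_eq (by rw [e1, e2]))
      (Real.exp_pos _).le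
  have hkey := integral_Ioi_of_hasDerivAt_of_tendsto' hderiv hint htend
  rw [hkey, hG]
  simp

open scoped FourierTransform

noncomputable def ff (c : ℝ) : ℝ → ℂ :=
  Set.indicator (Ioi 0) (fun u => (u : ℂ) * Complex.exp (-(c * u)))

lemma ff_cont (c : ℝ) : Continuous (ff c) := by
  have h : ff c = fun u => ((max u 0 : ℝ) : ℂ) * Complex.exp (-(c * (max u 0 : ℝ))) := by
    funext u
    rcases lt_or_ge 0 u with h | h
    · rw [ff, Set.indicator_of_mem (show u ∈ Ioi 0 from h), max_eq_left h.le]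
    · rw [ff, Set.indicator_of_notMem (by simpa using h), max_eq_right h]
      simp
  rw [h]
  continuity

lemma ff_int {c : ℝ} (hc : 0 < c) : Integrable (ff c) := by
  rw [ff, integrable_indicator_iff measurableSet_Ioi]
  exact cplxInt (by simpa using hc)

lemma ff_hat {c : ℝ} (hc : 0 < c) (ξ : ℝ) :
    𝓕 (ff c) ξ = 1 / ((c : ℂ) + ((2 * π * ξ : ℝ) : ℂ) * Complex.I) ^ 2 := by
  rw [Real.fourier_real_eq_integral_exp_smul]
  have h : (fun v : ℝ => Complex.exp (((-2 * π * v * ξ : ℝ) : ℂ) * Complex.I) • ff c v) =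
      Set.indicator (Ioi 0)
        (fun v : ℝ => (v : ℂ) *
          Complex.exp (-(((c : ℂ) + ((2 * π * ξ : ℝ) : ℂ) * Complex.I) * v))) := by
    funext v
    rcases lt_or_ge 0 v with h | h
    · rw [ff, Set.indicator_of_mem (show v ∈ Ioi 0 from h), Set.indicator_of_mem (show v ∈ Ioi 0 from h), smul_eq_mul]
      rw [mul_comm, mul_assoc, ← Complex.exp_add]
      congr 2
      push_cast
      ring
    · rw [ff, Set.indicator_of_notMem (by simpa using h),
        Set.indicator_of_notMem (by simpa using h), smul_zero]
  rw [h, integral_indicator measurableSet_Ioi]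
  exact cplxVal (by simpa using hc)

lemma denom_ne {c : ℝ} (hc : 0 < c) (r : ℝ) : ((c : ℂ) + (r : ℂ) * Complex.I) ≠ 0 := by
  intro h
  have := congrArg Complex.re h
  simp at this
  exact hc.ne' this

lemma ff_hat_int {c : ℝ} (hc : 1 ≤ c) : Integrable (𝓕 (ff c)) := by
  have hc0 : 0 < c := lt_of_lt_of_le one_pos hc
  have heq : 𝓕 (ff c) = fun ξ : ℝ => 1 / ((c : ℂ) + ((2 * π * ξ : ℝ) : ℂ) * Complex.I) ^ 2 :=
    funext (ff_hat hc0)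
  rw [heq]
  refine Integrable.mono' integrable_inv_one_add_sq ?_ (Eventually.of_forall fun ξ => ?_)
  · refine (Continuous.aestronglyMeasurable ?_)
    exact continuous_const.div (by continuity) fun ξ => pow_ne_zero 2 (denom_ne hc0 _)
  · have hnorm : ‖((c : ℂ) + ((2 * π * ξ : ℝ) : ℂ) * Complex.I) ^ 2‖ = c ^ 2 + (2 * π * ξ) ^ 2 := by
      rw [norm_pow, Complex.sq_norm, Complex.normSq_add_mul_I]
    rw [norm_div, norm_one, hnorm, one_div]
    rw [inv_le_inv₀ (by positivity) (by positivity)]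
    have h1 : (1 : ℝ) ≤ c ^ 2 := by nlinarith
    have hpi : (1 : ℝ) ≤ (2 * π) ^ 2 := by nlinarith [Real.pi_gt_three]
    have h2 : ξ ^ 2 ≤ (2 * π * ξ) ^ 2 := by
      rw [mul_pow]
      exact le_mul_of_one_le_left (sq_nonneg ξ) hpi
    linarith

lemma ff_inv {c : ℝ} (hc : 1 ≤ c) (x : ℝ) :
    ∫ ξ : ℝ, Complex.exp (((2 * π * ξ * x : ℝ) : ℂ) * Complex.I) • 𝓕 (ff c) ξ = ff c x := by
  have hc0 : 0 < c := lt_of_lt_of_le one_pos hc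
  have h := (ff_int hc0).fourierInv_fourier_eq (ff_hat_int hc) ((ff_cont c).continuousAt (x := x))
  rw [← h, fourierInv_eq_fourier_neg,
    Real.fourier_real_eq_integral_exp_smul]
  congr 1
  funext ξ
  norm_num


/-- Bach's kernel identity (equation (5.2) of the paper): for `0 < a < 1` and `y > 0`,
`(1/(2π)) ∫_{−∞}^{∞} y^{2+it}/(2+a+it)² dt` equals `0` if `0 < y < 1` and
`y^{−a} log y` if `y ≥ 1`, the integral being absolutely convergent.  Here
`y^{2+it} = exp((2+it)·log y)`. -/
theorem stmt12 (a : ℝ) (ha : 0 < a) (ha1 : a < 1) (y : ℝ) (hy : 0 < y) :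
    Integrable (fun t : ℝ =>
      Complex.exp ((2 + (t : ℂ) * Complex.I) * (Real.log y : ℂ)) /
        ((2 + (a : ℂ) + (t : ℂ) * Complex.I) ^ 2)) ∧
    ((1 / (2 * Real.pi) : ℝ) : ℂ) *
        (∫ t : ℝ, Complex.exp ((2 + (t : ℂ) * Complex.I) * (Real.log y : ℂ)) /
          ((2 + (a : ℂ) + (t : ℂ) * Complex.I) ^ 2)) =
      if y < 1 then 0 else ((y ^ (-a) * Real.log y : ℝ) : ℂ) := by
  set x : ℝ := Real.log y with hx
  set c : ℝ := 2 + a with hcdef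
  have hc0 : 0 < c := by positivity
  have hc1 : 1 ≤ c := by simp [hcdef]; linarith
  set g : ℝ → ℂ := fun t : ℝ =>
    Complex.exp ((2 + (t : ℂ) * Complex.I) * (x : ℂ)) / (((c : ℝ) : ℂ) + (t : ℂ) * Complex.I) ^ 2
    with hgdef
  have hfun : (fun t : ℝ =>
      Complex.exp ((2 + (t : ℂ) * Complex.I) * (Real.log y : ℂ)) /
        ((2 + (a : ℂ) + (t : ℂ) * Complex.I) ^ 2)) = g := by
    funext t
    rw [hgdef]
    congr 2
    rw [hcdef]
    push_cast
    ring
  rw [hfun]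
  -- integrability
  have hg_cont : Continuous g := by
    rw [hgdef]
    refine Continuous.div (by fun_prop) (by fun_prop) fun t => pow_ne_zero 2 (denom_ne hc0 t)
  have hg_int : Integrable g := by
    refine Integrable.mono' (integrable_inv_one_add_sq.const_mul (Real.exp (2 * x)))
      hg_cont.aestronglyMeasurable (Eventually.of_forall fun t => ?_)
    have hnum : ‖Complex.exp ((2 + (t : ℂ) * Complex.I) * (x : ℂ))‖ = Real.exp (2 * x) := by
      rw [Complex.norm_exp]
      congr 1
      simp [Complex.mul_re]
    have hden : ‖(((c : ℝ) : ℂ) + (t : ℂ) * Complex.I) ^ 2‖ = c ^ 2 + t ^ 2 := by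
      rw [norm_pow, Complex.sq_norm, Complex.normSq_add_mul_I]
    rw [hgdef]
    simp only [norm_div]
    rw [hnum, hden, div_eq_mul_inv]
    refine mul_le_mul_of_nonneg_left ?_ (Real.exp_pos _).le
    rw [inv_le_inv₀ (by positivity) (by positivity)]
    nlinarith
  refine ⟨hg_int, ?_⟩
  -- value
  have hsub : ∫ ξ : ℝ, g (2 * π * ξ) = |(2 * π)⁻¹| • ∫ t : ℝ, g t :=
    MeasureTheory.Measure.integral_comp_mul_left g (2 * π)
  have hval : ∫ ξ : ℝ, g (2 * π * ξ) = Complex.exp (2 * (x : ℂ)) * ff c x := by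
    have heq : (fun ξ : ℝ => g (2 * π * ξ)) = fun ξ : ℝ =>
        Complex.exp (2 * (x : ℂ)) *
          (Complex.exp (((2 * π * ξ * x : ℝ) : ℂ) * Complex.I) • 𝓕 (ff c) ξ) := by
      funext ξ
      rw [ff_hat hc0 ξ, smul_eq_mul, hgdef]
      show Complex.exp ((2 + ((2 * π * ξ : ℝ) : ℂ) * Complex.I) * (x : ℂ)) /
          (((c : ℝ) : ℂ) + ((2 * π * ξ : ℝ) : ℂ) * Complex.I) ^ 2 = _
      rw [show ((2 : ℂ) + ((2 * π * ξ : ℝ) : ℂ) * Complex.I) * (x : ℂ) =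
          2 * (x : ℂ) + ((2 * π * ξ * x : ℝ) : ℂ) * Complex.I by push_cast; ring,
        Complex.exp_add]
      ring
    rw [heq, MeasureTheory.integral_const_mul, ff_inv hc1 x]
  have hfin : ∫ t : ℝ, g t = ((2 * π : ℝ) : ℂ) * (Complex.exp (2 * (x : ℂ)) * ff c x) := by
    rw [← hval, hsub, abs_of_pos (by positivity), Complex.real_smul, ← mul_assoc,
      ← Complex.ofReal_mul, mul_inv_cancel₀ (by positivity), Complex.ofReal_one, one_mul]
  rw [hfin, ← mul_assoc, ← Complex.ofReal_mul]
  rw [show (1 / (2 * π)) * (2 * π) = 1 by field_simp, Complex.ofReal_one, one_mul]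
  rcases lt_or_ge y 1 with h | h
  · rw [if_pos h]
    have hx0 : x < 0 := Real.log_neg hy h
    rw [ff, Set.indicator_of_notMem (by simpa using hx0.le)]
    rw [mul_zero]
  · rw [if_neg (not_lt.2 h)]
    have hx0 : 0 ≤ x := Real.log_nonneg h
    have hffx : ff c x = (x : ℂ) * Complex.exp (-(c * x)) := by
      rcases hx0.eq_or_lt with h0 | h0
      · rw [ff, Set.indicator_of_notMem (by simp [← h0]), ← h0]
        simp
      · rw [ff, Set.indicator_of_mem (show x ∈ Ioi 0 from h0)]
    rw [hffx, show Complex.exp (2 * (x : ℂ)) * ((x : ℂ) * Complex.exp (-(c * x))) =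
      (x : ℂ) * Complex.exp (2 * (x : ℂ) + -(c * x)) by rw [Complex.exp_add]; ring]
    rw [Real.rpow_def_of_pos hy, ← hx]
    rw [show (2 * (x : ℂ) + -(c * x)) = ((x * (-a) : ℝ) : ℂ) by
      rw [hcdef]; push_cast; ring]
    rw [← Complex.ofReal_exp ]
    push_cast
    ring
end
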